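/- Let à have ‖Ã^k‖ ≤ c λ^k for all k ≥ 0 with λ ∈ (0,1), and let (ẑ_t) be a sequence with ‖ẑ_t − ẑ_{t+1}‖ ≤ h δ_t for nonnegative reals δ_t. If ε_t = Ã^t ε_0 + Σ_{i=0}^{t−1} Ã^i(ẑ_{t−i−1} − ẑ_{t−i}), then Σ_{t=0}^{T−1} ‖ε_t‖ ≤ (c/(1−λ)) (‖ε_0‖ + h Σ_{t=0}^{T−1} δ_t). -/

import Mathlib

open scoped Matrix.Norms.L2Operator

/-- Matrix-vector product as a map of Euclidean spaces. -/
noncomputable def mulE {a b : ℕ} (A : Matrix (Fin a) (Fin b) ℝ) (x : EuclideanSpace ℝ (Fin b)) :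
    EuclideanSpace ℝ (Fin a) :=
  (WithLp.equiv 2 _).symm (A.mulVec ((WithLp.equiv 2 _) x))

lemma mulE_norm_le {a b : ℕ} (A : Matrix (Fin a) (Fin b) ℝ) (x : EuclideanSpace ℝ (Fin b)) :
    ‖mulE A x‖ ≤ ‖A‖ * ‖x‖ :=
  A.l2_opNorm_mulVec x

lemma cauchy_key (T : ℕ) (a b : ℕ → ℝ) (ha : ∀ i, 0 ≤ a i) (hb : ∀ j, 0 ≤ b j) :
    ∑ t ∈ Finset.range T, ∑ i ∈ Finset.range t, a i * b (t - i - 1) ≤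
      (∑ i ∈ Finset.range T, a i) * (∑ j ∈ Finset.range T, b j) := by
  rw [Finset.sum_mul_sum, ← Finset.sum_product', Finset.sum_sigma']
  have hinj : Set.InjOn (fun x : Σ _ : ℕ, ℕ => (x.2, x.1 - x.2 - 1))
      ((Finset.range T).sigma fun t => Finset.range t) := by
    rintro ⟨t, i⟩ hx ⟨t', i'⟩ hy hxy
    simp only [Finset.mem_coe, Finset.mem_sigma, Finset.mem_range] at hx hy
    simp only [Prod.mk.injEq] at hxy
    obtain ⟨h1, h2⟩ := hxy
    subst h1
    have : t = t' := by omega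
    subst this; rfl
  calc ∑ x ∈ (Finset.range T).sigma fun t => Finset.range t, a x.2 * b (x.1 - x.2 - 1)
      = ∑ p ∈ ((Finset.range T).sigma fun t => Finset.range t).image
          (fun x : Σ _ : ℕ, ℕ => (x.2, x.1 - x.2 - 1)), a p.1 * b p.2 := by
        rw [Finset.sum_image (fun x hx y hy hxy => hinj hx hy hxy)]
    _ ≤ ∑ p ∈ Finset.range T ×ˢ Finset.range T, a p.1 * b p.2 := by
        apply Finset.sum_le_sum_of_subset_of_nonneg
        · intro p hp
          simp only [Finset.mem_image, Finset.mem_sigma, Finset.mem_range] at hp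
          obtain ⟨⟨t, i⟩, ⟨ht, hi⟩, rfl⟩ := hp
          dsimp only at ht hi ⊢
          simp only [Finset.mem_product, Finset.mem_range]
          omega
        · intro p _ _; exact mul_nonneg (ha _) (hb _)

lemma geo_le (lam : ℝ) (h0 : 0 < lam) (h1 : lam < 1) (T : ℕ) :
    ∑ i ∈ Finset.range T, lam ^ i ≤ 1 / (1 - lam) := by
  have h2 : (0:ℝ) < 1 - lam := by linarith
  rw [geom_sum_eq h1.ne]
  rw [show (lam ^ T - 1)/(lam - 1) = (1 - lam ^ T)/(1 - lam) by
    rw [div_eq_div_iff (sub_ne_zero.mpr h1.ne) h2.ne']; ring]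
  exact div_le_div₀ zero_le_one (by nlinarith [pow_pos h0 T]) h2 le_rfl

/-- summed bound on the error states. -/
theorem stmt10 {p : ℕ} (At : Matrix (Fin p) (Fin p) ℝ) (c lam h : ℝ)
    (hlam0 : 0 < lam) (hlam1 : lam < 1) (hc : 0 < c)
    (hA : ∀ k : ℕ, ‖At ^ k‖ ≤ c * lam ^ k)
    (zhat ε : ℕ → EuclideanSpace ℝ (Fin p)) (δ : ℕ → ℝ) (hδ : ∀ t, 0 ≤ δ t)
    (hz : ∀ t, ‖zhat t - zhat (t + 1)‖ ≤ h * δ t)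
    (hε : ∀ t, ε t = mulE (At ^ t) (ε 0) +
      ∑ i ∈ Finset.range t, mulE (At ^ i) (zhat (t - i - 1) - zhat (t - i)))
    (T : ℕ) :
    ∑ t ∈ Finset.range T, ‖ε t‖ ≤
      c / (1 - lam) * (‖ε 0‖ + h * ∑ t ∈ Finset.range T, δ t) := by
  have hlam' : (0:ℝ) < 1 - lam := by linarith
  -- pointwise bound
  have hbound : ∀ t, ‖ε t‖ ≤ c * lam ^ t * ‖ε 0‖
      + ∑ i ∈ Finset.range t, c * lam ^ i * (h * δ (t - i - 1)) := by
    intro t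
    rw [hε t]
    refine (norm_add_le _ _).trans (add_le_add ?_ ?_)
    · exact (mulE_norm_le _ _).trans (mul_le_mul_of_nonneg_right (hA t) (norm_nonneg _))
    · refine (norm_sum_le _ _).trans (Finset.sum_le_sum fun i hi => ?_)
      refine (mulE_norm_le _ _).trans ?_
      have hi' : i < t := Finset.mem_range.mp hi
      have hz' : ‖zhat (t - i - 1) - zhat (t - i)‖ ≤ h * δ (t - i - 1) := by
        have : t - i = (t - i - 1) + 1 := by omega
        rw [this]; exact hz _
      calc ‖At ^ i‖ * ‖zhat (t - i - 1) - zhat (t - i)‖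
          ≤ (c * lam ^ i) * (h * δ (t - i - 1)) := by
            apply mul_le_mul (hA i) hz' (norm_nonneg _)
            positivity
        _ = c * lam ^ i * (h * δ (t - i - 1)) := by ring
  calc ∑ t ∈ Finset.range T, ‖ε t‖
      ≤ ∑ t ∈ Finset.range T, (c * lam ^ t * ‖ε 0‖
        + ∑ i ∈ Finset.range t, c * lam ^ i * (h * δ (t - i - 1))) :=
        Finset.sum_le_sum fun t _ => hbound t
    _ = c * ‖ε 0‖ * (∑ t ∈ Finset.range T, lam ^ t)
        + c * ∑ t ∈ Finset.range T, ∑ i ∈ Finset.range t, lam ^ i * (h * δ (t - i - 1)) := by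
        rw [Finset.sum_add_distrib, Finset.mul_sum, Finset.mul_sum]
        congr 1
        · apply Finset.sum_congr rfl; intros; ring
        · apply Finset.sum_congr rfl; intros; rw [Finset.mul_sum]
          apply Finset.sum_congr rfl; intros; ring
    _ ≤ c * ‖ε 0‖ * (1 / (1 - lam))
        + c * ((∑ i ∈ Finset.range T, lam ^ i) * (∑ j ∈ Finset.range T, h * δ j)) := by
        refine add_le_add ?_ ?_
        · exact mul_le_mul_of_nonneg_left (geo_le lam hlam0 hlam1 T) (by positivity)
        · refine mul_le_mul_of_nonneg_left ?_ hc.le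
          exact cauchy_key T (fun i => lam ^ i) (fun j => h * δ j)
            (fun i => by positivity) (fun j => le_trans (norm_nonneg _) (hz j))
    _ ≤ c * ‖ε 0‖ * (1 / (1 - lam))
        + c * ((1 / (1 - lam)) * (∑ j ∈ Finset.range T, h * δ j)) := by
        refine add_le_add_right (mul_le_mul_of_nonneg_left ?_ hc.le) _
        refine mul_le_mul_of_nonneg_right (geo_le lam hlam0 hlam1 T) ?_
        exact Finset.sum_nonneg fun j _ => le_trans (norm_nonneg _) (hz j)
    _ = c / (1 - lam) * (‖ε 0‖ + h * ∑ t ∈ Finset.range T, δ t) := by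
        rw [← Finset.mul_sum, div_eq_mul_one_div]; ring
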